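/- (Lemma 6.) Let p, q, s be integers with p, q ≥ 3, s ≥ 1, and gcd(p,q) = gcd(s,pq) = 1, and set r = pq + s, so that p, q, r are relatively prime in pairs. Then for every integer m < pqr, the coefficient a_m of Q_{p,q,r} (interpreted as 0 for m < 0 or m > (p−1)(q−1)(r−1)) satisfies a_m = Σ₁ + Σ₂, where Σ₁ = σ_s(m) − σ_s(m−p) − σ_s(m−q) + σ_s(m−q−p) and Σ₂ = σ_p(m−s) − σ_p(m−s−pq) − σ_p(m−q−s) + σ_p(m−q−s−pq), with σ_k(m) = Σ_{m−k < n ≤ m} χ_{p,q,r}(n). -/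

import Mathlib

open Polynomial Classical

/-- Denominator `(X^{pq}-1)(X^{qr}-1)(X^{rp}-1)(X-1)` of the ternary
inclusion-exclusion polynomial. -/
noncomputable def incexcD (p q r : ℕ) : Polynomial ℤ :=
  (X ^ (p * q) - 1) * (X ^ (q * r) - 1) * (X ^ (r * p) - 1) * (X - 1)

/-- Numerator `(X^{pqr}-1)(X^p-1)(X^q-1)(X^r-1)` of the ternary
inclusion-exclusion polynomial. -/
noncomputable def incexcN (p q r : ℕ) : Polynomial ℤ :=
  (X ^ (p * q * r) - 1) * (X ^ p - 1) * (X ^ q - 1) * (X ^ r - 1)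

/-- The coefficient of a polynomial at an integer index, interpreted as `0`
for negative indices (and automatically `0` beyond the degree). -/
noncomputable def coeffZ (Q : Polynomial ℤ) (m : ℤ) : ℤ :=
  if 0 ≤ m then Q.coeff m.toNat else 0

/-- `chi p q r n = 1` if `n` is `{p,q,r}`-representable, i.e. if in the unique
representation `n = x·qr + y·rp + z·pq + δ·pqr` with `0 ≤ x < p`, `0 ≤ y < q`,
`0 ≤ z < r`, the integer `δ` is nonnegative; `chi p q r n = 0` otherwise. -/
noncomputable def chi (p q r : ℕ) (n : ℤ) : ℤ :=
  if ∃ x y z δ : ℤ, 0 ≤ x ∧ x < p ∧ 0 ≤ y ∧ y < q ∧ 0 ≤ z ∧ z < r ∧ 0 ≤ δ ∧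
      n = x * q * r + y * r * p + z * p * q + δ * p * q * r
  then 1 else 0

/-- The summatory function `σ_k(m) = Σ_{m-k < n ≤ m} chi p q r n`. -/
noncomputable def sigmaSum (p q r k : ℕ) (m : ℤ) : ℤ :=
  ∑ i ∈ Finset.range k, chi p q r (m - i)


section Arith

variable {p q r : ℕ}

lemma rep_unique (hp : 0 < p)
    (hqr : IsCoprime ((p : ℤ)) ((q : ℤ) * r)) (hrp : IsCoprime ((q : ℤ)) ((r : ℤ) * p))
    (hpq : IsCoprime ((r : ℤ)) ((p : ℤ) * q))
    {x y z δ x' y' z' δ' : ℤ}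
    (hx0 : 0 ≤ x) (hx1 : x < p) (hy0 : 0 ≤ y) (hy1 : y < q) (hz0 : 0 ≤ z) (hz1 : z < r)
    (hx0' : 0 ≤ x') (hx1' : x' < p) (hy0' : 0 ≤ y') (hy1' : y' < q)
    (hz0' : 0 ≤ z') (hz1' : z' < r)
    (h : x * q * r + y * r * p + z * p * q + δ * p * q * r
       = x' * q * r + y' * r * p + z' * p * q + δ' * p * q * r) :
    x = x' ∧ y = y' ∧ z = z' ∧ δ = δ' := by
  have hq : 0 < q := by exact_mod_cast lt_of_le_of_lt hy0 hy1
  have hr : 0 < r := by exact_mod_cast lt_of_le_of_lt hz0 hz1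
  have hxx : x = x' := by
    have hd : (p : ℤ) ∣ (x - x') * ((q : ℤ) * r) :=
      ⟨(y' - y) * r + (z' - z) * q + (δ' - δ) * (q * r), by linear_combination h⟩
    have h2 := hqr.dvd_of_dvd_mul_right hd
    have h3 := Int.eq_zero_of_abs_lt_dvd h2 (by rw [abs_sub_lt_iff]; constructor <;> omega)
    omega
  subst hxx
  have hyy : y = y' := by
    have hd : (q : ℤ) ∣ (y - y') * ((r : ℤ) * p) :=
      ⟨(z' - z) * p + (δ' - δ) * (r * p), by linear_combination h⟩
    have h2 := hrp.dvd_of_dvd_mul_right hd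
    have h3 := Int.eq_zero_of_abs_lt_dvd h2 (by rw [abs_sub_lt_iff]; constructor <;> omega)
    omega
  subst hyy
  have hzz : z = z' := by
    have hd : (r : ℤ) ∣ (z - z') * ((p : ℤ) * q) :=
      ⟨(δ' - δ) * (p * q), by linear_combination h⟩
    have h2 := hpq.dvd_of_dvd_mul_right hd
    have h3 := Int.eq_zero_of_abs_lt_dvd h2 (by rw [abs_sub_lt_iff]; constructor <;> omega)
    omega
  subst hzz
  refine ⟨rfl, rfl, rfl, ?_⟩
  have hpqr : ((p : ℤ) * q * r) ≠ 0 := by positivity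
  have : δ * ((p : ℤ) * q * r) = δ' * ((p : ℤ) * q * r) := by linear_combination h
  exact mul_right_cancel₀ hpqr this

lemma rep_exists (hp : 0 < p) (hq : 0 < q) (hr : 0 < r)
    (hqr : IsCoprime ((p : ℤ)) ((q : ℤ) * r)) (hrp : IsCoprime ((q : ℤ)) ((r : ℤ) * p))
    (hpq : IsCoprime ((r : ℤ)) ((p : ℤ) * q)) (n : ℤ) :
    ∃ x y z δ : ℤ, 0 ≤ x ∧ x < p ∧ 0 ≤ y ∧ y < q ∧ 0 ≤ z ∧ z < r ∧
      n = x * q * r + y * r * p + z * p * q + δ * p * q * r := by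
  have key : ∀ (P : ℕ) (m : ℤ), 0 < P → IsCoprime ((P : ℤ)) m →
      ∃ x : ℤ, 0 ≤ x ∧ x < P ∧ (P : ℤ) ∣ n - x * m := by
    rintro P m hP ⟨a, b, hab⟩
    have hP0 : ((P : ℤ)) ≠ 0 := by positivity
    have hPpos : (0 : ℤ) < P := by exact_mod_cast hP
    refine ⟨(n * b) % P, Int.emod_nonneg _ hP0, Int.emod_lt_of_pos _ hPpos, ?_⟩
    refine ⟨n * a + ((n * b) / P) * m, ?_⟩
    have hmod : (n * b) % P = n * b - P * ((n * b) / P) := Int.emod_def _ _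
    rw [hmod]
    linear_combination -n * hab
  obtain ⟨x, hx0, hx1, c1, hc1⟩ := key p ((q : ℤ) * r) hp hqr
  obtain ⟨y, hy0, hy1, c2, hc2⟩ := key q ((r : ℤ) * p) hq hrp
  obtain ⟨z, hz0, hz1, c3, hc3⟩ := key r ((p : ℤ) * q) hr hpq
  set M : ℤ := n - x * q * r - y * r * p - z * p * q with hM
  have hdp : (p : ℤ) ∣ M := ⟨c1 - y * r - z * q, by rw [hM]; linear_combination hc1⟩
  have hdq : (q : ℤ) ∣ M := ⟨c2 - z * p - x * r, by rw [hM]; linear_combination hc2⟩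
  have hdr : (r : ℤ) ∣ M := ⟨c3 - x * q - y * p, by rw [hM]; linear_combination hc3⟩
  have hcpq : IsCoprime ((p : ℤ)) ((q : ℤ)) := hqr.of_mul_right_left
  have hdpq : ((p : ℤ) * q) ∣ M := hcpq.mul_dvd hdp hdq
  have hdpqr : ((p : ℤ) * q * r) ∣ M := by
    have := (hpq.symm).mul_dvd hdpq hdr
    exact this
  obtain ⟨δ, hδ⟩ := hdpqr
  exact ⟨x, y, z, δ, hx0, hx1, hy0, hy1, hz0, hz1, by rw [hM] at hδ; linear_combination hδ⟩

lemma chi_eq (hp : 0 < p)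
    (hqr : IsCoprime ((p : ℤ)) ((q : ℤ) * r)) (hrp : IsCoprime ((q : ℤ)) ((r : ℤ) * p))
    (hpq : IsCoprime ((r : ℤ)) ((p : ℤ) * q))
    {n x y z δ : ℤ}
    (hx0 : 0 ≤ x) (hx1 : x < p) (hy0 : 0 ≤ y) (hy1 : y < q) (hz0 : 0 ≤ z) (hz1 : z < r)
    (heq : n = x * q * r + y * r * p + z * p * q + δ * p * q * r) :
    chi p q r n = if 0 ≤ δ then 1 else 0 := by
  rw [chi]
  by_cases h : 0 ≤ δ
  · rw [if_pos ⟨x, y, z, δ, hx0, hx1, hy0, hy1, hz0, hz1, h, heq⟩, if_pos h]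
  · rw [if_neg, if_neg h]
    rintro ⟨x', y', z', δ', hx0', hx1', hy0', hy1', hz0', hz1', hδ', heq'⟩
    obtain ⟨-, -, -, h4⟩ := rep_unique hp hqr hrp hpq hx0 hx1 hy0 hy1 hz0 hz1
      hx0' hx1' hy0' hy1' hz0' hz1' (heq.symm.trans heq')
    omega

lemma chi_neg {n : ℤ} (hn : n < 0) : chi p q r n = 0 := by
  rw [chi, if_neg]
  rintro ⟨x, y, z, δ, hx0, -, hy0, -, hz0, -, hδ0, heq⟩
  have h1 : (0 : ℤ) ≤ x * q * r := by positivity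
  have h2 : (0 : ℤ) ≤ y * r * p := by positivity
  have h3 : (0 : ℤ) ≤ z * p * q := by positivity
  have h4 : (0 : ℤ) ≤ δ * p * q * r := by positivity
  omega

lemma chi_shift (hp : 0 < p)
    (hqr : IsCoprime ((p : ℤ)) ((q : ℤ) * r)) (hrp : IsCoprime ((q : ℤ)) ((r : ℤ) * p))
    (hpq : IsCoprime ((r : ℤ)) ((p : ℤ) * q))
    {n x y z δ : ℤ}
    (hx0 : 0 ≤ x) (hx1 : x < p) (hy0 : 0 ≤ y) (hy1 : y < q) (hz0 : 0 ≤ z) (hz1 : z < r)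
    (heq : n = x * q * r + y * r * p + z * p * q + δ * p * q * r)
    (a b c : ℤ) (ha : a = 0 ∨ a = 1) (hb : b = 0 ∨ b = 1) (hc : c = 0 ∨ c = 1)
    (n' : ℤ) (hn' : n' = n - a * ((q : ℤ) * r) - b * ((r : ℤ) * p) - c * ((p : ℤ) * q)) :
    chi p q r n' = if 0 ≤ δ - a * (if x = 0 then 1 else 0) - b * (if y = 0 then 1 else 0)
      - c * (if z = 0 then 1 else 0) then 1 else 0 := by
  have hq : 0 < q := by exact_mod_cast lt_of_le_of_lt hy0 hy1
  have hr : 0 < r := by exact_mod_cast lt_of_le_of_lt hz0 hz1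
  set u : ℤ := if x = 0 then 1 else 0 with hu
  set v : ℤ := if y = 0 then 1 else 0 with hv
  set w : ℤ := if z = 0 then 1 else 0 with hw
  have hpz : (1 : ℤ) ≤ p := by exact_mod_cast hp
  have hqz : (1 : ℤ) ≤ q := by exact_mod_cast hq
  have hrz : (1 : ℤ) ≤ r := by exact_mod_cast hr
  have hu' : (x = 0 ∧ u = 1) ∨ (1 ≤ x ∧ u = 0) := by
    by_cases h : x = 0 <;> simp [hu, h] <;> omega
  have hv' : (y = 0 ∧ v = 1) ∨ (1 ≤ y ∧ v = 0) := by
    by_cases h : y = 0 <;> simp [hv, h] <;> omega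
  have hw' : (z = 0 ∧ w = 1) ∨ (1 ≤ z ∧ w = 0) := by
    by_cases h : z = 0 <;> simp [hw, h] <;> omega
  apply chi_eq hp hqr hrp hpq
    (x := x - a + (a * u) * p) (y := y - b + (b * v) * q) (z := z - c + (c * w) * r)
    (δ := δ - a * u - b * v - c * w)
  · rcases ha with rfl | rfl <;> rcases hu' with ⟨h1, h2⟩ | ⟨h1, h2⟩ <;> rw [h2] <;> omega
  · rcases ha with rfl | rfl <;> rcases hu' with ⟨h1, h2⟩ | ⟨h1, h2⟩ <;> rw [h2] <;> omega
  · rcases hb with rfl | rfl <;> rcases hv' with ⟨h1, h2⟩ | ⟨h1, h2⟩ <;> rw [h2] <;> omega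
  · rcases hb with rfl | rfl <;> rcases hv' with ⟨h1, h2⟩ | ⟨h1, h2⟩ <;> rw [h2] <;> omega
  · rcases hc with rfl | rfl <;> rcases hw' with ⟨h1, h2⟩ | ⟨h1, h2⟩ <;> rw [h2] <;> omega
  · rcases hc with rfl | rfl <;> rcases hw' with ⟨h1, h2⟩ | ⟨h1, h2⟩ <;> rw [h2] <;> omega
  · rw [hn', heq]; ring

set_option maxHeartbeats 2000000 in
lemma chi_key (hp : 0 < p) (hq : 0 < q) (hr : 0 < r)
    (hqr : IsCoprime ((p : ℤ)) ((q : ℤ) * r)) (hrp : IsCoprime ((q : ℤ)) ((r : ℤ) * p))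
    (hpq : IsCoprime ((r : ℤ)) ((p : ℤ) * q)) (n : ℤ) :
    chi p q r n - chi p q r (n - (q : ℤ) * r) - chi p q r (n - (r : ℤ) * p)
      - chi p q r (n - (p : ℤ) * q)
      + chi p q r (n - (q : ℤ) * r - (r : ℤ) * p) + chi p q r (n - (q : ℤ) * r - (p : ℤ) * q)
      + chi p q r (n - (r : ℤ) * p - (p : ℤ) * q)
      - chi p q r (n - (q : ℤ) * r - (r : ℤ) * p - (p : ℤ) * q)
    = (if n = 0 then 1 else 0) - 2 * (if n = ((p * q * r : ℕ) : ℤ) then 1 else 0)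
      + (if n = 2 * ((p * q * r : ℕ) : ℤ) then 1 else 0) := by
  obtain ⟨x, y, z, δ, hx0, hx1, hy0, hy1, hz0, hz1, heq⟩ := rep_exists hp hq hr hqr hrp hpq n
  have S := chi_shift hp hqr hrp hpq hx0 hx1 hy0 hy1 hz0 hz1 heq
  rw [S 0 0 0 (Or.inl rfl) (Or.inl rfl) (Or.inl rfl) n (by ring),
      S 1 0 0 (Or.inr rfl) (Or.inl rfl) (Or.inl rfl) (n - (q : ℤ) * r) (by ring),
      S 0 1 0 (Or.inl rfl) (Or.inr rfl) (Or.inl rfl) (n - (r : ℤ) * p) (by ring),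
      S 0 0 1 (Or.inl rfl) (Or.inl rfl) (Or.inr rfl) (n - (p : ℤ) * q) (by ring),
      S 1 1 0 (Or.inr rfl) (Or.inr rfl) (Or.inl rfl) (n - (q : ℤ) * r - (r : ℤ) * p) (by ring),
      S 1 0 1 (Or.inr rfl) (Or.inl rfl) (Or.inr rfl) (n - (q : ℤ) * r - (p : ℤ) * q) (by ring),
      S 0 1 1 (Or.inl rfl) (Or.inr rfl) (Or.inr rfl) (n - (r : ℤ) * p - (p : ℤ) * q) (by ring),
      S 1 1 1 (Or.inr rfl) (Or.inr rfl) (Or.inr rfl)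
        (n - (q : ℤ) * r - (r : ℤ) * p - (p : ℤ) * q) (by ring)]
  have hpz : (0 : ℤ) < p := by exact_mod_cast hp
  have hqz : (0 : ℤ) < q := by exact_mod_cast hq
  have hrz : (0 : ℤ) < r := by exact_mod_cast hr
  have h0 : n = 0 ↔ x = 0 ∧ y = 0 ∧ z = 0 ∧ δ = 0 := by
    constructor
    · intro h
      have h' : x * q * r + y * r * p + z * p * q + δ * p * q * r
          = 0 * (q : ℤ) * r + 0 * (r : ℤ) * p + 0 * (p : ℤ) * q + 0 * (p : ℤ) * q * r := by
        linear_combination h - heq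
      exact rep_unique hp hqr hrp hpq hx0 hx1 hy0 hy1 hz0 hz1
        le_rfl hpz le_rfl hqz le_rfl hrz h'
    · rintro ⟨rfl, rfl, rfl, rfl⟩; rw [heq]; ring
  have h1 : n = ((p * q * r : ℕ) : ℤ) ↔ x = 0 ∧ y = 0 ∧ z = 0 ∧ δ = 1 := by
    push_cast
    constructor
    · intro h
      have h' : x * q * r + y * r * p + z * p * q + δ * p * q * r
          = 0 * (q : ℤ) * r + 0 * (r : ℤ) * p + 0 * (p : ℤ) * q + 1 * (p : ℤ) * q * r := by
        linear_combination h - heq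
      exact rep_unique hp hqr hrp hpq hx0 hx1 hy0 hy1 hz0 hz1
        le_rfl hpz le_rfl hqz le_rfl hrz h'
    · rintro ⟨rfl, rfl, rfl, rfl⟩; rw [heq]; ring
  have h2 : n = 2 * ((p * q * r : ℕ) : ℤ) ↔ x = 0 ∧ y = 0 ∧ z = 0 ∧ δ = 2 := by
    push_cast
    constructor
    · intro h
      have h' : x * q * r + y * r * p + z * p * q + δ * p * q * r
          = 0 * (q : ℤ) * r + 0 * (r : ℤ) * p + 0 * (p : ℤ) * q + 2 * (p : ℤ) * q * r := by
        linear_combination h - heq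
      exact rep_unique hp hqr hrp hpq hx0 hx1 hy0 hy1 hz0 hz1
        le_rfl hpz le_rfl hqz le_rfl hrz h'
    · rintro ⟨rfl, rfl, rfl, rfl⟩; rw [heq]; ring
  rw [if_congr h0 rfl rfl, if_congr h1 rfl rfl, if_congr h2 rfl rfl]
  rcases eq_or_ne x 0 with hxx | hxx <;> rcases eq_or_ne y 0 with hyy | hyy <;>
    rcases eq_or_ne z 0 with hzz | hzz <;>
    simp only [hxx, hyy, hzz, eq_self_iff_true, if_true, if_false, true_and, false_and,
      and_false, and_true, mul_one, mul_zero, zero_mul, one_mul, sub_zero, if_neg,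
      not_false_iff] <;>
    split_ifs <;> omega

end Arith

section Series

variable {p q r : ℕ}

/-- The generating function of `chi`. -/
noncomputable def chiSeries (p q r : ℕ) : PowerSeries ℤ :=
  PowerSeries.mk fun n => chi p q r (n : ℤ)

lemma coeff_chiSeries_mul_X_pow (t n : ℕ) :
    (PowerSeries.coeff n) (chiSeries p q r * (PowerSeries.X : PowerSeries ℤ) ^ t) =
      chi p q r ((n : ℤ) - t) := by
  rw [PowerSeries.coeff_mul_X_pow']
  split_ifs with h
  · rw [chiSeries, PowerSeries.coeff_mk]
    congr 1
    omega
  · rw [chi_neg (by omega)]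

lemma one_sub_X_pow_ne_zero {k : ℕ} (hk : 0 < k) :
    (1 - (PowerSeries.X : PowerSeries ℤ) ^ k) ≠ 0 := by
  intro h
  have h2 := congrArg (PowerSeries.coeff k) h
  simp [PowerSeries.coeff_one, PowerSeries.coeff_X_pow, hk.ne'] at h2

lemma chiSeries_mul (hp : 0 < p) (hq : 0 < q) (hr : 0 < r)
    (hqr : IsCoprime ((p : ℤ)) ((q : ℤ) * r)) (hrp : IsCoprime ((q : ℤ)) ((r : ℤ) * p))
    (hpq : IsCoprime ((r : ℤ)) ((p : ℤ) * q)) :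
    chiSeries p q r * ((1 - (PowerSeries.X : PowerSeries ℤ) ^ (q * r)) *
        (1 - (PowerSeries.X : PowerSeries ℤ) ^ (r * p)) *
        (1 - (PowerSeries.X : PowerSeries ℤ) ^ (p * q)))
      = (1 - (PowerSeries.X : PowerSeries ℤ) ^ (p * q * r)) ^ 2 := by
  have hexp : chiSeries p q r * ((1 - (PowerSeries.X : PowerSeries ℤ) ^ (q * r)) *
        (1 - (PowerSeries.X : PowerSeries ℤ) ^ (r * p)) *
        (1 - (PowerSeries.X : PowerSeries ℤ) ^ (p * q))) =
      chiSeries p q r * PowerSeries.X ^ 0 - chiSeries p q r * PowerSeries.X ^ (q * r)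
        - chiSeries p q r * PowerSeries.X ^ (r * p) - chiSeries p q r * PowerSeries.X ^ (p * q)
        + chiSeries p q r * PowerSeries.X ^ (q * r + r * p)
        + chiSeries p q r * PowerSeries.X ^ (q * r + p * q)
        + chiSeries p q r * PowerSeries.X ^ (r * p + p * q)
        - chiSeries p q r * PowerSeries.X ^ (q * r + r * p + p * q) := by
    simp only [pow_add, pow_zero]
    ring
  have hrhs : (1 - (PowerSeries.X : PowerSeries ℤ) ^ (p * q * r)) ^ 2 =
      1 - PowerSeries.X ^ (p * q * r) - PowerSeries.X ^ (p * q * r)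
        + PowerSeries.X ^ (p * q * r + p * q * r) := by
    rw [pow_add]; ring
  rw [hexp, hrhs]
  ext n
  simp only [map_add, map_sub, PowerSeries.coeff_one,
    PowerSeries.coeff_X_pow, coeff_chiSeries_mul_X_pow]
  have K := chi_key hp hq hr hqr hrp hpq (n : ℤ)
  rw [show (2 : ℤ) * ((p * q * r : ℕ) : ℤ) = ((p * q * r + p * q * r : ℕ) : ℤ) by
    push_cast; ring] at K
  simp only [Nat.cast_inj, Nat.cast_eq_zero] at K
  have e0 : ((n : ℤ) - ((0 : ℕ) : ℤ)) = (n : ℤ) := by push_cast; ring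
  have e1 : ((n : ℤ) - ((q * r : ℕ) : ℤ)) = (n : ℤ) - (q : ℤ) * r := by push_cast; ring
  have e2 : ((n : ℤ) - ((r * p : ℕ) : ℤ)) = (n : ℤ) - (r : ℤ) * p := by push_cast; ring
  have e3 : ((n : ℤ) - ((p * q : ℕ) : ℤ)) = (n : ℤ) - (p : ℤ) * q := by push_cast; ring
  have e4 : ((n : ℤ) - ((q * r + r * p : ℕ) : ℤ)) = (n : ℤ) - (q : ℤ) * r - (r : ℤ) * p := by
    push_cast; ring
  have e5 : ((n : ℤ) - ((q * r + p * q : ℕ) : ℤ)) = (n : ℤ) - (q : ℤ) * r - (p : ℤ) * q := by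
    push_cast; ring
  have e6 : ((n : ℤ) - ((r * p + p * q : ℕ) : ℤ)) = (n : ℤ) - (r : ℤ) * p - (p : ℤ) * q := by
    push_cast; ring
  have e7 : ((n : ℤ) - ((q * r + r * p + p * q : ℕ) : ℤ))
      = (n : ℤ) - (q : ℤ) * r - (r : ℤ) * p - (p : ℤ) * q := by push_cast; ring
  rw [e0, e1, e2, e3, e4, e5, e6, e7]
  linarith [K]

end Series

lemma coeff_chiSeries_geom {p q r : ℕ} (t k n : ℕ) :
    (PowerSeries.coeff n) (chiSeries p q r *
        ((PowerSeries.X : PowerSeries ℤ) ^ t * ∑ i ∈ Finset.range k, PowerSeries.X ^ i)) =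
      sigmaSum p q r k ((n : ℤ) - t) := by
  have h1 : chiSeries p q r *
      ((PowerSeries.X : PowerSeries ℤ) ^ t * ∑ i ∈ Finset.range k, PowerSeries.X ^ i)
      = ∑ i ∈ Finset.range k, chiSeries p q r * PowerSeries.X ^ (t + i) := by
    rw [Finset.mul_sum, Finset.mul_sum]
    refine Finset.sum_congr rfl fun i _ => ?_
    rw [pow_add]
  rw [h1, map_sum, sigmaSum]
  refine Finset.sum_congr rfl fun i _ => ?_
  rw [coeff_chiSeries_mul_X_pow]
  congr 1
  push_cast; ring


set_option maxHeartbeats 1000000 in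
theorem stmt_15 (p q s : ℕ) (hp : 3 ≤ p) (hq : 3 ≤ q) (hs : 1 ≤ s)
    (hpq : Nat.Coprime p q) (hspq : Nat.Coprime s (p * q))
    (Q : Polynomial ℤ)
    (hQ : Q * incexcD p q (p * q + s) = incexcN p q (p * q + s))
    (m : ℤ) (hm : m < (p : ℤ) * q * (p * q + s)) :
    coeffZ Q m =
      (sigmaSum p q (p * q + s) s m - sigmaSum p q (p * q + s) s (m - p) -
        sigmaSum p q (p * q + s) s (m - q) +
        sigmaSum p q (p * q + s) s (m - q - p)) +
      (sigmaSum p q (p * q + s) p (m - s) -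
        sigmaSum p q (p * q + s) p (m - s - p * q) -
        sigmaSum p q (p * q + s) p (m - q - s) +
        sigmaSum p q (p * q + s) p (m - q - s - p * q)) := by
  set r : ℕ := p * q + s with hrdef
  have hp0 : 0 < p := by omega
  have hq0 : 0 < q := by omega
  have hs0 : 0 < s := hs
  have hr0 : 0 < r := by simp [hrdef]; omega
  -- coprimality
  have hps : Nat.Coprime p s := (Nat.Coprime.coprime_dvd_left (dvd_mul_right p q) hspq.symm)
  have hqs : Nat.Coprime q s := (Nat.Coprime.coprime_dvd_left (dvd_mul_left q p) hspq.symm)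
  have hpr : Nat.Coprime p r := by
    have h : Nat.Coprime p (s + p * q) := (Nat.coprime_add_mul_left_right p s q).mpr hps
    simpa [hrdef, Nat.add_comm] using h
  have hqr' : Nat.Coprime q r := by
    have h : Nat.Coprime q (s + q * p) := (Nat.coprime_add_mul_left_right q s p).mpr hqs
    simpa [hrdef, Nat.add_comm, Nat.mul_comm] using h
  have h1 : IsCoprime ((p : ℤ)) ((q : ℤ) * r) := by
    have h := (hpq.mul_right hpr).isCoprime
    push_cast at h; exact h
  have h2 : IsCoprime ((q : ℤ)) ((r : ℤ) * p) := by
    have h := (hqr'.mul_right hpq.symm).isCoprime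
    push_cast at h; exact h
  have h3 : IsCoprime ((r : ℤ)) ((p : ℤ) * q) := by
    have h := ((hpr.symm).mul_right (hqr'.symm)).isCoprime
    push_cast at h; exact h
  -- the power series version of hQ
  have hQS : (Q : PowerSeries ℤ) *
      (((PowerSeries.X : PowerSeries ℤ) ^ (p * q) - 1) * (PowerSeries.X ^ (q * r) - 1) *
        (PowerSeries.X ^ (r * p) - 1) * (PowerSeries.X - 1)) =
      ((PowerSeries.X : PowerSeries ℤ) ^ (p * q * r) - 1) * (PowerSeries.X ^ p - 1) *
        (PowerSeries.X ^ q - 1) * (PowerSeries.X ^ r - 1) := by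
    have h := congrArg (fun P : Polynomial ℤ => (P : PowerSeries ℤ)) hQ
    simpa only [incexcD, incexcN, Polynomial.coe_mul, Polynomial.coe_sub, Polynomial.coe_pow,
      Polynomial.coe_one, Polynomial.coe_X] using h
  -- main power series identity
  have hgs := geom_sum_mul (PowerSeries.X : PowerSeries ℤ) s
  have hgp := geom_sum_mul (PowerSeries.X : PowerSeries ℤ) p
  have hx1 : (1 - (PowerSeries.X : PowerSeries ℤ)) ≠ 0 := by
    have h := one_sub_X_pow_ne_zero (k := 1) one_pos
    simpa using h
  have hD'ne : ((1 - (PowerSeries.X : PowerSeries ℤ) ^ (q * r)) *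
      (1 - (PowerSeries.X : PowerSeries ℤ) ^ (r * p)) *
      (1 - (PowerSeries.X : PowerSeries ℤ) ^ (p * q)) *
      (1 - (PowerSeries.X : PowerSeries ℤ))) ≠ 0 := by
    refine mul_ne_zero (mul_ne_zero (mul_ne_zero ?_ ?_) ?_) hx1 <;>
      exact one_sub_X_pow_ne_zero (by positivity)
  have e2 : (1 - (PowerSeries.X : PowerSeries ℤ) ^ p) * (1 - PowerSeries.X ^ q) *
      (1 - PowerSeries.X ^ r) =
      (1 - PowerSeries.X) *
        ((1 - PowerSeries.X ^ p) * (1 - PowerSeries.X ^ q) *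
            (∑ i ∈ Finset.range s, PowerSeries.X ^ i) +
          (1 - PowerSeries.X ^ q) * (1 - PowerSeries.X ^ (p * q)) * PowerSeries.X ^ s *
            (∑ i ∈ Finset.range p, PowerSeries.X ^ i)) := by
    rw [hrdef, pow_add]
    linear_combination ((1 - (PowerSeries.X : PowerSeries ℤ) ^ p) *
        (1 - PowerSeries.X ^ q)) * hgs +
      ((1 - (PowerSeries.X : PowerSeries ℤ) ^ q) * (1 - PowerSeries.X ^ (p * q)) *
        PowerSeries.X ^ s) * hgp
  have hmain : (Q : PowerSeries ℤ) * (1 - PowerSeries.X ^ (p * q * r)) =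
      chiSeries p q r *
        ((1 - PowerSeries.X ^ p) * (1 - PowerSeries.X ^ q) *
            (∑ i ∈ Finset.range s, PowerSeries.X ^ i) +
          (1 - PowerSeries.X ^ q) * (1 - PowerSeries.X ^ (p * q)) * PowerSeries.X ^ s *
            (∑ i ∈ Finset.range p, PowerSeries.X ^ i)) := by
    apply mul_right_cancel₀ hD'ne
    have hchi := chiSeries_mul hp0 hq0 hr0 h1 h2 h3
    calc (Q : PowerSeries ℤ) * (1 - PowerSeries.X ^ (p * q * r)) *
          ((1 - PowerSeries.X ^ (q * r)) * (1 - PowerSeries.X ^ (r * p)) *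
            (1 - PowerSeries.X ^ (p * q)) * (1 - PowerSeries.X))
        = (1 - PowerSeries.X ^ (p * q * r)) ^ 2 *
            ((1 - PowerSeries.X ^ p) * (1 - PowerSeries.X ^ q) * (1 - PowerSeries.X ^ r)) := by
          linear_combination (1 - (PowerSeries.X : PowerSeries ℤ) ^ (p * q * r)) * hQS
      _ = chiSeries p q r * ((1 - PowerSeries.X ^ (q * r)) * (1 - PowerSeries.X ^ (r * p)) *
            (1 - PowerSeries.X ^ (p * q))) *
            ((1 - PowerSeries.X ^ p) * (1 - PowerSeries.X ^ q) * (1 - PowerSeries.X ^ r)) := by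
          rw [hchi]
      _ = chiSeries p q r *
            ((1 - PowerSeries.X ^ p) * (1 - PowerSeries.X ^ q) *
                (∑ i ∈ Finset.range s, PowerSeries.X ^ i) +
              (1 - PowerSeries.X ^ q) * (1 - PowerSeries.X ^ (p * q)) * PowerSeries.X ^ s *
                (∑ i ∈ Finset.range p, PowerSeries.X ^ i)) *
            ((1 - PowerSeries.X ^ (q * r)) * (1 - PowerSeries.X ^ (r * p)) *
              (1 - PowerSeries.X ^ (p * q)) * (1 - PowerSeries.X)) := by
          rw [e2]; ring
  -- coefficient extraction
  rcases lt_or_ge m 0 with hneg | hpos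
  · have hpqZ : (0 : ℤ) ≤ (p : ℤ) * q := by positivity
    have hpZ : (0 : ℤ) ≤ (p : ℤ) := by positivity
    have hqZ : (0 : ℤ) ≤ (q : ℤ) := by positivity
    have hsZ : (0 : ℤ) ≤ (s : ℤ) := by positivity
    have sig0 : ∀ (k : ℕ) (m' : ℤ), m' < 0 → sigmaSum p q r k m' = 0 := by
      intro k m' hm'
      rw [sigmaSum]
      apply Finset.sum_eq_zero
      intro i _
      exact chi_neg (by have h0 : (0:ℤ) ≤ (i:ℤ) := Int.natCast_nonneg i; omega)
    rw [coeffZ, if_neg (not_le.2 hneg), sig0 s m hneg, sig0 s (m - p) (by linarith),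
      sig0 s (m - q) (by linarith), sig0 s (m - q - p) (by linarith),
      sig0 p (m - s) (by linarith), sig0 p (m - s - p * q) (by linarith),
      sig0 p (m - q - s) (by linarith), sig0 p (m - q - s - p * q) (by linarith)]
    ring
  · obtain ⟨n, rfl⟩ : ∃ n : ℕ, m = (n : ℤ) := ⟨m.toNat, (Int.toNat_of_nonneg hpos).symm⟩
    have hn : n < p * q * r := by
      have : ((n : ℤ)) < ((p * q * r : ℕ) : ℤ) := by
        rw [hrdef]; push_cast; linarith [hm]
      exact_mod_cast this
    have hco := congrArg (PowerSeries.coeff n) hmain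
    have hexp2 : chiSeries p q r *
        ((1 - PowerSeries.X ^ p) * (1 - PowerSeries.X ^ q) *
            (∑ i ∈ Finset.range s, PowerSeries.X ^ i) +
          (1 - PowerSeries.X ^ q) * (1 - PowerSeries.X ^ (p * q)) * PowerSeries.X ^ s *
            (∑ i ∈ Finset.range p, PowerSeries.X ^ i)) =
        chiSeries p q r * (PowerSeries.X ^ 0 * ∑ i ∈ Finset.range s, PowerSeries.X ^ i)
          - chiSeries p q r * (PowerSeries.X ^ p * ∑ i ∈ Finset.range s, PowerSeries.X ^ i)
          - chiSeries p q r * (PowerSeries.X ^ q * ∑ i ∈ Finset.range s, PowerSeries.X ^ i)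
          + chiSeries p q r * (PowerSeries.X ^ (q + p) * ∑ i ∈ Finset.range s, PowerSeries.X ^ i)
          + chiSeries p q r * (PowerSeries.X ^ s * ∑ i ∈ Finset.range p, PowerSeries.X ^ i)
          - chiSeries p q r *
              (PowerSeries.X ^ (s + p * q) * ∑ i ∈ Finset.range p, PowerSeries.X ^ i)
          - chiSeries p q r * (PowerSeries.X ^ (q + s) * ∑ i ∈ Finset.range p, PowerSeries.X ^ i)
          + chiSeries p q r *
              (PowerSeries.X ^ (q + s + p * q) * ∑ i ∈ Finset.range p, PowerSeries.X ^ i) := by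
      simp only [pow_add, pow_zero]
      ring
    rw [hexp2, mul_one_sub] at hco
    simp only [map_add, map_sub, coeff_chiSeries_geom, PowerSeries.coeff_mul_X_pow',
      Polynomial.coeff_coe, if_neg (by omega : ¬ p * q * r ≤ n)] at hco
    rw [coeffZ, if_pos (by positivity), Int.toNat_natCast]
    rw [show ((n : ℤ) - ((0 : ℕ) : ℤ)) = (n : ℤ) by push_cast; ring,
      show ((n : ℤ) - ((q + p : ℕ) : ℤ)) = (n : ℤ) - q - p by push_cast; ring,
      show ((n : ℤ) - ((s + p * q : ℕ) : ℤ)) = (n : ℤ) - s - p * q by push_cast; ring,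
      show ((n : ℤ) - ((q + s : ℕ) : ℤ)) = (n : ℤ) - q - s by push_cast; ring,
      show ((n : ℤ) - ((q + s + p * q : ℕ) : ℤ)) = (n : ℤ) - q - s - p * q by
        push_cast; ring] at hco
    linarith [hco]
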